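/- Let a : [0,1) → (0,∞) be continuous, C¹ on (0,1), with s ↦ a(s)·s strictly convex on [0,1), and fix θ ∈ (0,1) and q ≥ 2·(a'(1−θ)(1−θ) + a(1−θ))/a(1−θ). Define a_θ(s) = a(s) for 0 ≤ s ≤ 1−θ and a_θ(s) = (1−θ)^{−(q−2)/2} a(1−θ) s^{(q−2)/2} for s > 1−θ. Then the map φ(s) := a_θ(s)·s is strictly convex on [0,∞). -/

import Mathlib

/-- The truncated coefficient `a_θ` of the paper. -/
noncomputable def aTrunc (a : ℝ → ℝ) (θ q : ℝ) : ℝ → ℝ := fun s =>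
  if s ≤ 1 - θ then a s
  else (1 - θ) ^ (-(q - 2) / 2) * a (1 - θ) * s ^ ((q - 2) / 2)

/-- Auxiliary arithmetic fact about slopes of three points. -/
lemma slope_aux_ineq {fx fy fz x y z : ℝ} (hxy : x < y) (hyz : y < z)
    (h : (fy - fx) / (y - x) < (fz - fy) / (z - y)) :
    (fy - fx) / (y - x) < (fz - fx) / (z - x) ∧
      (fz - fx) / (z - x) < (fz - fy) / (z - y) := by
  have hp : 0 < y - x := sub_pos.2 hxy
  have hr : 0 < z - y := sub_pos.2 hyz
  have hpr : 0 < z - x := by linarith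
  rw [div_lt_div_iff₀ hp hr] at h
  constructor
  · rw [div_lt_div_iff₀ hp hpr]; nlinarith
  · rw [div_lt_div_iff₀ hpr hr]; nlinarith

/-- Lemma 2.2 of the paper: the truncated map `φ(s) = a_θ(s)·s` is strictly
convex on `[0,∞)`, provided `q ≥ 2(a'(1−θ)(1−θ) + a(1−θ))/a(1−θ)`. -/
theorem strictConvexOn_aTrunc_mul_self (a : ℝ → ℝ) (θ q : ℝ)
    (ha_cont : ContinuousOn a (Set.Ico 0 1))
    (ha_pos : ∀ s ∈ Set.Ico (0:ℝ) 1, 0 < a s)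
    (ha_C1 : ContDiffOn ℝ 1 a (Set.Ioo 0 1))
    (ha_conv : StrictConvexOn ℝ (Set.Ico 0 1) (fun s => a s * s))
    (hθ : θ ∈ Set.Ioo (0:ℝ) 1)
    (hq : 2 * (deriv a (1 - θ) * (1 - θ) + a (1 - θ)) / a (1 - θ) ≤ q) :
    StrictConvexOn ℝ (Set.Ici 0) (fun s => aTrunc a θ q s * s) := by
  obtain ⟨hθ0, hθ1⟩ := hθ
  set b : ℝ := 1 - θ with hb_def
  have hb0 : 0 < b := by simp [hb_def]; linarith
  have hb1 : b < 1 := by simp [hb_def]; linarith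
  have hbmem : b ∈ Set.Ico (0:ℝ) 1 := ⟨hb0.le, hb1⟩
  have hab : 0 < a b := ha_pos b hbmem
  -- the two pieces
  set F : ℝ → ℝ := fun s => a s * s with hF_def
  set c : ℝ := b ^ (-(q - 2) / 2) * a b with hc_def
  have hc0 : 0 < c := mul_pos (Real.rpow_pos_of_pos hb0 _) hab
  set G : ℝ → ℝ := fun s => c * s ^ (q / 2) with hG_def
  -- derivative of F at b
  have had : DifferentiableAt ℝ a b :=
    ((ha_C1.differentiableOn one_ne_zero).differentiableAt
      (isOpen_Ioo.mem_nhds ⟨hb0, hb1⟩))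
  set D1 : ℝ := deriv a b * b + a b with hD1_def
  have hFd : HasDerivAt F D1 b := by
    have h := had.hasDerivAt.mul (hasDerivAt_id b)
    simp only [mul_one] at h; exact h
  -- key slope bounds for F
  have key1 : ∀ u, 0 ≤ u → u < b → (F b - F u) / (b - u) < D1 := by
    intro u hu0 hub
    have h := ha_conv.slope_lt_of_hasDerivAt ⟨hu0, hub.trans hb1⟩ hbmem hub hFd
    rwa [slope_def_field] at h
  -- q > 2 and D1 ≤ a b * (q/2)
  have hFb : F b = a b * b := rfl
  have hF0 : F 0 = 0 := by simp [hF_def]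
  have habD1 : a b < D1 := by
    have h := key1 0 le_rfl hb0
    rw [hF0, hFb, sub_zero, sub_zero, mul_div_assoc, div_self hb0.ne', mul_one] at h
    exact h
  rw [div_le_iff₀ hab] at hq
  have hq2 : 2 < q := by nlinarith
  have hq2' : (1:ℝ) < q / 2 := by linarith
  set D2 : ℝ := a b * (q / 2) with hD2_def
  have hD12 : D1 ≤ D2 := by rw [hD2_def]; linarith
  -- strict convexity of G on [0,∞)
  have hGc : StrictConvexOn ℝ (Set.Ici 0) G := by
    apply strictConvexOn_of_slope_strict_mono_adjacent (convex_Ici (0:ℝ))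
    intro x y z hx hz hxy hyz
    have h := (strictConvexOn_rpow hq2').slope_strict_mono_adjacent hx hz hxy hyz
    have hp : 0 < y - x := sub_pos.2 hxy
    have hr : 0 < z - y := sub_pos.2 hyz
    rw [div_lt_div_iff₀ hp hr] at h ⊢
    simp only [hG_def]
    nlinarith [mul_lt_mul_of_pos_left h hc0]
  -- derivative of G at b
  have hbpow : ∀ r s : ℝ, r + s = 1 → b ^ r * b ^ s = b := by
    intro r s hrs
    rw [← Real.rpow_add hb0, hrs, Real.rpow_one]
  have hGd : HasDerivAt G D2 b := by
    have h := (Real.hasDerivAt_rpow_const (x := b) (p := q / 2)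
      (Or.inl hb0.ne')).const_mul c
    have hval : c * (q / 2 * b ^ (q / 2 - 1)) = D2 := by
      have h1 : b ^ (-(q - 2) / 2) * b ^ (q / 2 - 1) * b = b := by
        rw [← Real.rpow_add hb0, ← Real.rpow_add_one hb0.ne',
          show -(q - 2) / 2 + (q / 2 - 1) + 1 = 1 by ring, Real.rpow_one]
      have hb' : b ^ (-(q - 2) / 2) * b ^ (q / 2 - 1) = 1 := by
        have := mul_right_cancel₀ hb0.ne' (h1.trans (one_mul b).symm)
        exact this
      rw [hc_def, hD2_def]
      nlinarith [hb']
    rw [← hval]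
    exact h
  have key2 : ∀ v, b < v → D2 < (G v - G b) / (v - b) := by
    intro v hbv
    have h := hGc.lt_slope_of_hasDerivAt (Set.mem_Ici.2 hb0.le)
      (Set.mem_Ici.2 (hb0.trans hbv).le) hbv hGd
    rwa [slope_def_field] at h
  have key12 : ∀ u v, 0 ≤ u → u < b → b < v →
      (F b - F u) / (b - u) < (G v - G b) / (v - b) := fun u v hu0 hub hbv =>
    lt_of_lt_of_le (key1 u hu0 hub) (hD12.trans (key2 v hbv).le)
  -- agreement of φ with the pieces
  have hFG : F b = G b := by
    rw [hFb, hG_def, hc_def]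
    have := hbpow (-(q - 2) / 2) (q / 2) (by ring)
    simp only []
    rw [mul_assoc, mul_comm (a b) (b ^ (q/2)), ← mul_assoc, this]
    ring
  have hφF : ∀ s, s ≤ b → aTrunc a θ q s * s = F s := by
    intro s hs
    simp only [aTrunc, ← hb_def, if_pos hs, hF_def]
  have hφG : ∀ s, b ≤ s → aTrunc a θ q s * s = G s := by
    intro s hs
    rcases eq_or_lt_of_le hs with h | h
    · rw [hφF s h.symm.le, ← h, hFG]
    · have hs0 : 0 < s := hb0.trans h
      simp only [aTrunc, ← hb_def, if_neg (not_le.2 h), hG_def, hc_def]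
      rw [show q / 2 = (q - 2) / 2 + 1 by ring, Real.rpow_add_one hs0.ne']
      ring
  -- strict slope inequalities for F on [0, b] and G on [b, ∞)
  have keyF : ∀ u v w, 0 ≤ u → u < v → v < w → w ≤ b →
      (F v - F u) / (v - u) < (F w - F v) / (w - v) := by
    intro u v w hu huv hvw hwb
    exact ha_conv.slope_strict_mono_adjacent
      ⟨hu, by linarith⟩ ⟨by linarith, by linarith⟩ huv hvw
  have keyG : ∀ u v w, b ≤ u → u < v → v < w →
      (G v - G u) / (v - u) < (G w - G v) / (w - v) := by
    intro u v w hu huv hvw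
    exact hGc.slope_strict_mono_adjacent
      (Set.mem_Ici.2 (hb0.le.trans hu)) (Set.mem_Ici.2 (by linarith)) huv hvw
  -- main argument
  apply strictConvexOn_of_slope_strict_mono_adjacent (convex_Ici (0:ℝ))
  intro x y z hx hz hxy hyz
  simp only [Set.mem_Ici] at hx hz
  have hy0 : 0 ≤ y := hx.trans hxy.le
  rcases lt_trichotomy y b with hyb | hyb | hyb
  · -- y < b
    rcases le_or_gt z b with hzb | hbz
    · rw [hφF x (by linarith), hφF y hyb.le, hφF z hzb]
      exact keyF x y z hx hxy hyz hzb
    · -- x < y < b < z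
      rw [hφF x (by linarith), hφF y hyb.le, hφG z hbz.le]
      have h1 : (F y - F x) / (y - x) < (F b - F y) / (b - y) :=
        keyF x y b hx hxy hyb le_rfl
      have h2 : (F b - F y) / (b - y) < (G z - F b) / (z - b) := by
        have h := key12 y z hy0 hyb hbz
        rwa [← hFG] at h
      have h3 := (slope_aux_ineq hyb hbz h2).1
      exact h1.trans h3
  · -- y = b
    rw [hφF x (by linarith), hφF y hyb.le, hφG z (by linarith), hyb]
    have h := key12 x z hx (hyb ▸ hxy) (hyb ▸ hyz)
    rwa [← hFG] at h
  · -- y > b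
    rcases le_or_gt b x with hbx | hxb
    · rw [hφG x hbx, hφG y (by linarith), hφG z (by linarith)]
      exact keyG x y z hbx hxy hyz
    · -- x < b < y < z
      rw [hφF x hxb.le, hφG y hyb.le, hφG z (by linarith)]
      have h1 : (F b - F x) / (b - x) < (G y - F b) / (y - b) := by
        have h := key12 x y hx hxb hyb
        rwa [← hFG] at h
      have h2 := (slope_aux_ineq hxb hyb h1).2
      have h3 : (G y - F b) / (y - b) < (G z - G y) / (z - y) := by
        rw [hFG]; exact keyG b y z le_rfl hyb hyz
      exact h2.trans h3
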